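/- (Algebraic form of Lemma 1.3 / Lemma A.1, the key combinatorial lemma.) Suppose g : α → α → R and t : α → R satisfy, for all indices i ≠ j in {1, …, k} and all labels u ∈ {a_i, b_i}, v ∈ {a_j, b_j}, the relation g(u,v) + g(v,u) = −(2t(u) − 1)(2t(v) − 1). Define f : α → α → R by f(u,v) = g(u,v) − g(v,u). Then W_f((a_1,b_1), …, (a_k,b_k)) = 2^k · W_g((a_1,b_1), …, (a_k,b_k)). -/

import Mathlib

/-- The sign of a Boolean: `true ↦ 1`, `false ↦ -1` (encoding `ε ∈ {1, -1}`). -/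
def signR (R : Type*) [CommRing R] (e : Bool) : R := if e then 1 else -1

/-- `B_i(ε)`: the second component `b_i` if `ε = 1`, the first component `a_i` if `ε = -1`. -/
def Bc {α : Type*} (q : α × α) (e : Bool) : α := if e then q.2 else q.1

/-- `A_i(ε)`: the first component `a_i` if `ε = 1`, the second component `b_i` if `ε = -1`. -/
def Ac {α : Type*} (q : α × α) (e : Bool) : α := if e then q.1 else q.2

/-- `W_h((a_1,b_1), …, (a_k,b_k)) = Σ_{ε ∈ {1,−1}^k} Σ_{σ ∈ S'_k} ∏_{i=1}^k
ε_{σ(i)} · h(B_{σ(i)}(ε_{σ(i)}), A_{σ(i+1)}(ε_{σ(i+1)}))`, where `S'_k` is the set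
of permutations fixing the first index, and indices are cyclic (`σ(k+1) := σ(1)`). -/
def Wsum {R α : Type*} [CommRing R] (h : α → α → R) {k : ℕ} (p : Fin k → α × α) : R :=
  ∑ ε : Fin k → Bool,
    ∑ σ ∈ Finset.univ.filter (fun σ : Equiv.Perm (Fin k) => ∀ i : Fin k, (i : ℕ) = 0 → σ i = i),
      ∏ i : Fin k,
        signR R (ε (σ i)) * h (Bc (p (σ i)) (ε (σ i))) (Ac (p (σ (finRotate k i))) (ε (σ (finRotate k i))))

open Finset
section key
variable {V : Type*} [CommRing V] {n : ℕ}
def PermS (n : ℕ) : Finset (Equiv.Perm (Fin (n+2))) :=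
  Finset.univ.filter (fun σ => ∀ i : Fin (n+2), (i : ℕ) = 0 → σ i = i)
def pc (n : ℕ) : Fin (n+2) → (Fin (n+2) × Bool) × (Fin (n+2) × Bool) :=
  fun j => ((j, false), (j, true))
lemma Bc_pc (v : Fin (n+2)) (e : Bool) : Bc (pc n v) e = (v, e) := by cases e <;> rfl
lemma Ac_pc (v : Fin (n+2)) (e : Bool) : Ac (pc n v) e = (v, !e) := by cases e <;> rfl
variable (V) in
def TG (g : Fin (n+2) × Bool → Fin (n+2) × Bool → V) (σ : Equiv.Perm (Fin (n+2)))
    (δ : Fin (n+2) → Bool) (i : Fin (n+2)) : V :=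
  g (σ i, δ i) (σ (i+1), !δ (i+1))
variable (V) in
def TQ (lam : V) (s : Fin (n+2) × Bool → V) (σ : Equiv.Perm (Fin (n+2)))
    (δ : Fin (n+2) → Bool) (i : Fin (n+2)) : V :=
  lam * (s (σ i, δ i) * s (σ (i+1), !δ (i+1)))
variable (V) in
def SG (δ : Fin (n+2) → Bool) : V := ∏ i, signR V (δ i)
variable (V) in
def TT (g : Fin (n+2) × Bool → Fin (n+2) × Bool → V) (lam : V) (s : Fin (n+2) × Bool → V)
    (P : Finset (Fin (n+2))) (σ : Equiv.Perm (Fin (n+2))) (δ : Fin (n+2) → Bool) : V :=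
  SG V δ * ((∏ i ∈ P, TG V g σ δ i) * ∏ i ∈ univ \ P, TQ V lam s σ δ i)
variable (V) in
def MM (g : Fin (n+2) × Bool → Fin (n+2) × Bool → V) (lam : V) (s : Fin (n+2) × Bool → V)
    (P : Finset (Fin (n+2))) : V :=
  ∑ σ ∈ PermS n, ∑ δ : Fin (n+2) → Bool, TT V g lam s P σ δ

lemma Wsum_pc (h : Fin (n+2) × Bool → Fin (n+2) × Bool → V) :
    Wsum h (pc n) = ∑ σ ∈ PermS n, ∑ δ : Fin (n+2) → Bool, SG V δ * ∏ i, TG V h σ δ i := by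
  unfold Wsum
  rw [Finset.sum_comm]
  refine Finset.sum_congr rfl fun σ _ => ?_
  refine Fintype.sum_bijective (fun ε : Fin (n+2) → Bool => fun i => ε (σ i)) ?_ _ _ ?_
  · constructor
    · intro a b hab
      funext x
      simpa using congrFun hab (σ.symm x)
    · intro δ
      exact ⟨fun i => δ (σ.symm i), funext fun i => by simp⟩
  · intro ε
    unfold SG TG
    rw [← Finset.prod_mul_distrib]
    refine Finset.prod_congr rfl fun i _ => ?_
    rw [Bc_pc, Ac_pc, finRotate_succ_apply]

lemma MM_univ (g : Fin (n+2) × Bool → Fin (n+2) × Bool → V) (lam : V)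
    (s : Fin (n+2) × Bool → V) : MM V g lam s univ = Wsum g (pc n) := by
  rw [Wsum_pc]
  unfold MM TT
  refine Finset.sum_congr rfl fun σ _ => Finset.sum_congr rfl fun δ _ => ?_
  rw [sdiff_self]
  simp

lemma expandW (g : Fin (n+2) × Bool → Fin (n+2) × Bool → V) (lam : V)
    (s : Fin (n+2) × Bool → V) :
    Wsum (fun u v => g u v + lam * (s u * s v)) (pc n)
      = ∑ P ∈ (univ : Finset (Fin (n+2))).powerset, MM V g lam s P := by
  rw [Wsum_pc]
  have hin : ∀ (σ : Equiv.Perm (Fin (n+2))) (δ : Fin (n+2) → Bool),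
      SG V δ * ∏ i, TG V (fun u v => g u v + lam * (s u * s v)) σ δ i
        = ∑ P ∈ (univ : Finset (Fin (n+2))).powerset, TT V g lam s P σ δ := by
    intro σ δ
    unfold TT
    rw [← Finset.mul_sum]
    congr 1
    calc ∏ i, TG V (fun u v => g u v + lam * (s u * s v)) σ δ i
        = ∏ i, (TG V g σ δ i + TQ V lam s σ δ i) := Finset.prod_congr rfl fun i _ => rfl
      _ = _ := Finset.prod_add _ _ _
  refine Eq.trans (Finset.sum_congr rfl fun σ _ =>
    Eq.trans (Finset.sum_congr rfl fun δ _ => hin σ δ) Finset.sum_comm) Finset.sum_comm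

/-! ### The interval-reversal involution -/

def wfun (c d i : Fin (n+2)) : Fin (n+2) :=
  if h : c.1 < i.1 ∧ i.1 ≤ d.1 then
    ⟨c.1 + d.1 + 1 - i.1, by obtain ⟨h1, h2⟩ := h; have := d.isLt; omega⟩ else i

lemma wfun_val (c d i : Fin (n+2)) :
    (wfun c d i).1 = if c.1 < i.1 ∧ i.1 ≤ d.1 then c.1 + d.1 + 1 - i.1 else i.1 := by
  unfold wfun; split_ifs <;> rfl

def ufun (c d i : Fin (n+2)) : Fin (n+2) :=
  if h : c.1 < i.1 ∧ i.1 < d.1 then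
    ⟨c.1 + d.1 - i.1, by obtain ⟨h1, h2⟩ := h; have := d.isLt; omega⟩ else i

lemma ufun_val (c d i : Fin (n+2)) :
    (ufun c d i).1 = if c.1 < i.1 ∧ i.1 < d.1 then c.1 + d.1 - i.1 else i.1 := by
  unfold ufun; split_ifs <;> rfl

def dflip (c d : Fin (n+2)) (δ : Fin (n+2) → Bool) (i : Fin (n+2)) : Bool :=
  if c.1 < i.1 ∧ i.1 ≤ d.1 then !δ (wfun c d i) else δ i

lemma out_w {c d i : Fin (n+2)} (h : ¬(c.1 < i.1 ∧ i.1 ≤ d.1)) : wfun c d i = i := by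
  unfold wfun; rw [dif_neg h]

lemma out_d {c d i : Fin (n+2)} (δ : Fin (n+2) → Bool) (h : ¬(c.1 < i.1 ∧ i.1 ≤ d.1)) :
    dflip c d δ i = δ i := by
  unfold dflip; rw [if_neg h]

lemma wfun_invol (c d : Fin (n+2)) : Function.Involutive (wfun c d) := by
  intro i
  by_cases h : c.1 < i.1 ∧ i.1 ≤ d.1
  · have h1 : (wfun c d i).1 = c.1 + d.1 + 1 - i.1 := by rw [wfun_val, if_pos h]
    have h2 : c.1 < (wfun c d i).1 ∧ (wfun c d i).1 ≤ d.1 := by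
      obtain ⟨ha, hb⟩ := h; omega
    apply Fin.ext
    rw [wfun_val, if_pos h2, h1]
    obtain ⟨ha, hb⟩ := h; omega
  · rw [out_w h, out_w h]

lemma ufun_invol (c d : Fin (n+2)) : Function.Involutive (ufun c d) := by
  intro i
  by_cases h : c.1 < i.1 ∧ i.1 < d.1
  · have h1 : (ufun c d i).1 = c.1 + d.1 - i.1 := by rw [ufun_val, if_pos h]
    have h2 : c.1 < (ufun c d i).1 ∧ (ufun c d i).1 < d.1 := by
      obtain ⟨ha, hb⟩ := h; omega
    apply Fin.ext
    rw [ufun_val, if_pos h2, h1]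
    obtain ⟨ha, hb⟩ := h; omega
  · unfold ufun; rw [dif_neg h, dif_neg h]

lemma dflip_invol (c d : Fin (n+2)) : Function.Involutive (dflip c d) := by
  intro δ
  funext i
  by_cases h : c.1 < i.1 ∧ i.1 ≤ d.1
  · have hw : c.1 < (wfun c d i).1 ∧ (wfun c d i).1 ≤ d.1 := by
      rw [wfun_val, if_pos h]; obtain ⟨ha, hb⟩ := h; omega
    unfold dflip
    rw [if_pos h, if_pos hw, wfun_invol c d i]
    simp
  · rw [out_d _ h, out_d _ h]

def wperm (c d : Fin (n+2)) : Equiv.Perm (Fin (n+2)) :=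
  Function.Involutive.toPerm (wfun c d) (wfun_invol c d)

lemma wperm_apply (c d i : Fin (n+2)) : wperm c d i = wfun c d i := rfl

lemma add1_val (i : Fin (n+2)) : (i+1).1 = if i.1 = n+1 then 0 else i.1 + 1 := by
  rw [Fin.val_add_one]
  rcases eq_or_ne i (Fin.last (n+1)) with h | h
  · simp [h]
  · rw [if_neg h, if_neg (by simpa [Fin.ext_iff] using h)]

lemma add1_val_lt {i : Fin (n+2)} (h : i.1 < n+1) : (i+1).1 = i.1 + 1 := by
  rw [add1_val, if_neg (by omega)]

lemma out_succ {c d i : Fin (n+2)} (h : i.1 < c.1 ∨ d.1 < i.1) :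
    ¬(c.1 < (i+1).1 ∧ (i+1).1 ≤ d.1) := by
  have hc := c.isLt; have hd := d.isLt; have hi := i.isLt
  rw [add1_val]
  split_ifs <;> omega

lemma comp_out {c d : Fin (n+2)} (σ : Equiv.Perm (Fin (n+2))) (δ : Fin (n+2) → Bool)
    {i : Fin (n+2)} (h : i.1 < c.1 ∨ d.1 < i.1) :
    (σ * wperm c d) i = σ i ∧ dflip c d δ i = δ i ∧
      (σ * wperm c d) (i+1) = σ (i+1) ∧ dflip c d δ (i+1) = δ (i+1) := by
  have hb : ¬(c.1 < i.1 ∧ i.1 ≤ d.1) := by omega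
  have hb1 := out_succ h
  refine ⟨?_, out_d _ hb, ?_, out_d _ hb1⟩
  · rw [Equiv.Perm.mul_apply, wperm_apply, out_w hb]
  · rw [Equiv.Perm.mul_apply, wperm_apply, out_w hb1]

section comps
variable {c d : Fin (n+2)} (σ : Equiv.Perm (Fin (n+2))) (δ : Fin (n+2) → Bool)

lemma comp_c (hcd : c.1 < d.1) :
    (σ * wperm c d) c = σ c ∧ dflip c d δ c = δ c ∧
      (σ * wperm c d) (c+1) = σ d ∧ dflip c d δ (c+1) = !δ d := by
  have hd := d.isLt
  have hnb : ¬(c.1 < c.1 ∧ c.1 ≤ d.1) := by omega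
  have hc1 : (c+1).1 = c.1 + 1 := add1_val_lt (by omega)
  have hb : c.1 < (c+1).1 ∧ (c+1).1 ≤ d.1 := by omega
  have hwc1 : wfun c d (c+1) = d := by
    apply Fin.ext; rw [wfun_val, if_pos hb]; omega
  refine ⟨?_, out_d _ hnb, ?_, ?_⟩
  · rw [Equiv.Perm.mul_apply, wperm_apply, out_w hnb]
  · rw [Equiv.Perm.mul_apply, wperm_apply, hwc1]
  · unfold dflip; rw [if_pos hb, hwc1]

lemma comp_d (hcd : c.1 < d.1) :
    (σ * wperm c d) d = σ (c+1) ∧ dflip c d δ d = !δ (c+1) ∧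
      (σ * wperm c d) (d+1) = σ (d+1) ∧ dflip c d δ (d+1) = δ (d+1) := by
  have hd := d.isLt
  have hb : c.1 < d.1 ∧ d.1 ≤ d.1 := by omega
  have hc1 : (c+1).1 = c.1 + 1 := add1_val_lt (by omega)
  have hwd : wfun c d d = c+1 := by
    apply Fin.ext; rw [wfun_val, if_pos hb]; omega
  have hnb : ¬(c.1 < (d+1).1 ∧ (d+1).1 ≤ d.1) := by
    have hcv := c.isLt
    rw [add1_val]; split_ifs <;> omega
  refine ⟨?_, ?_, ?_, out_d _ hnb⟩
  · rw [Equiv.Perm.mul_apply, wperm_apply, hwd]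
  · unfold dflip; rw [if_pos hb, hwd]
  · rw [Equiv.Perm.mul_apply, wperm_apply, out_w hnb]

lemma comp_run (hi : c.1 < i.1 ∧ i.1 < d.1) :
    (σ * wperm c d) i = σ (ufun c d i + 1) ∧ dflip c d δ i = !δ (ufun c d i + 1) ∧
      (σ * wperm c d) (i+1) = σ (ufun c d i) ∧ dflip c d δ (i+1) = !δ (ufun c d i) := by
  have hd := d.isLt
  have hj : (ufun c d i).1 = c.1 + d.1 - i.1 := by rw [ufun_val, if_pos hi]
  have hj1 : (ufun c d i + 1).1 = (ufun c d i).1 + 1 := add1_val_lt (by omega)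
  have hi1 : (i+1).1 = i.1 + 1 := add1_val_lt (by omega)
  have hbi : c.1 < i.1 ∧ i.1 ≤ d.1 := by omega
  have hbi1 : c.1 < (i+1).1 ∧ (i+1).1 ≤ d.1 := by omega
  have hwi : wfun c d i = ufun c d i + 1 := by
    apply Fin.ext; rw [wfun_val, if_pos hbi]; omega
  have hwi1 : wfun c d (i+1) = ufun c d i := by
    apply Fin.ext; rw [wfun_val, if_pos hbi1]; omega
  refine ⟨?_, ?_, ?_, ?_⟩
  · rw [Equiv.Perm.mul_apply, wperm_apply, hwi]
  · unfold dflip; rw [if_pos hbi, hwi]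
  · rw [Equiv.Perm.mul_apply, wperm_apply, hwi1]
  · unfold dflip; rw [if_pos hbi1, hwi1]

end comps

lemma signR_not (R : Type*) [CommRing R] (e : Bool) : signR R (!e) = - signR R e := by
  cases e <;> simp [signR]

def Bset (c d : Fin (n+2)) : Finset (Fin (n+2)) :=
  univ.filter (fun i => c.1 < i.1 ∧ i.1 ≤ d.1)

def Oset (c d : Fin (n+2)) : Finset (Fin (n+2)) :=
  univ.filter (fun i => c.1 < i.1 ∧ i.1 < d.1)

lemma Bset_card {c d : Fin (n+2)} (hcd : c.1 < d.1) :
    (Bset c d).card = (Oset c d).card + 1 := by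
  have : Bset c d = insert d (Oset c d) := by
    ext i
    simp only [Bset, Oset, mem_filter, mem_insert, mem_univ, true_and, Fin.ext_iff]
    omega
  rw [this, card_insert_of_notMem (by simp only [Oset, mem_filter, mem_univ, true_and]; omega)]

lemma SG_flip (c d : Fin (n+2)) (δ : Fin (n+2) → Bool) :
    SG V (dflip c d δ) = (-1)^((Bset c d).card) * SG V δ := by
  unfold SG
  rw [← prod_filter_mul_prod_filter_not univ (fun i => c.1 < i.1 ∧ i.1 ≤ d.1)
    (fun i => signR V (dflip c d δ i)),
    ← prod_filter_mul_prod_filter_not univ (fun i => c.1 < i.1 ∧ i.1 ≤ d.1)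
    (fun i => signR V (δ i))]
  have h2 : ∏ i ∈ univ.filter (fun i => ¬(c.1 < i.1 ∧ i.1 ≤ d.1)), signR V (dflip c d δ i)
      = ∏ i ∈ univ.filter (fun i => ¬(c.1 < i.1 ∧ i.1 ≤ d.1)), signR V (δ i) := by
    refine prod_congr rfl fun i hi => ?_
    rw [mem_filter] at hi
    rw [out_d _ hi.2]
  have h1 : ∏ i ∈ Bset c d, signR V (dflip c d δ i)
      = (-1)^((Bset c d).card) * ∏ i ∈ Bset c d, signR V (δ i) := by
    have e1 : ∏ i ∈ Bset c d, signR V (dflip c d δ i)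
        = ∏ i ∈ Bset c d, (-1) * signR V (δ (wfun c d i)) := by
      refine prod_congr rfl fun i hi => ?_
      simp only [Bset, mem_filter, mem_univ, true_and] at hi
      unfold dflip
      rw [if_pos hi, signR_not]
      ring
    rw [e1, prod_mul_distrib, prod_const]
    congr 1
    refine prod_nbij' (wfun c d) (wfun c d) ?_ ?_ ?_ ?_ ?_
    · intro a ha
      simp only [Bset, mem_filter, mem_univ, true_and] at ha ⊢
      rw [wfun_val, if_pos ha]
      obtain ⟨h1, h2⟩ := ha; omega
    · intro a ha
      simp only [Bset, mem_filter, mem_univ, true_and] at ha ⊢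
      rw [wfun_val, if_pos ha]
      obtain ⟨h1, h2⟩ := ha; omega
    · intro a _; exact wfun_invol c d a
    · intro a _; exact wfun_invol c d a
    · intro a _; rfl
  show (∏ i ∈ Bset c d, signR V (dflip c d δ i)) * _ = _
  rw [h1, h2]
  show _ = (-1)^((Bset c d).card) * ((∏ i ∈ Bset c d, signR V (δ i)) * _)
  ring

section flips
variable {c d : Fin (n+2)} {P : Finset (Fin (n+2))} (g₀ : Fin (n+2) × Bool → Fin (n+2) × Bool → V)
  (lam : V) (s : Fin (n+2) × Bool → V) (σ : Equiv.Perm (Fin (n+2))) (δ : Fin (n+2) → Bool)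

lemma GP_flip (hcd : c.1 < d.1) (hcP : c ∉ P) (hdP : d ∉ P)
    (hIoo : ∀ j : Fin (n+2), c.1 < j.1 → j.1 < d.1 → j ∈ P)
    (hanti : ∀ u v : Fin (n+2) × Bool, u.1 ≠ v.1 → g₀ u v = - g₀ v u) :
    ∏ i ∈ P, TG V g₀ (σ * wperm c d) (dflip c d δ) i
      = (-1)^((Oset c d).card) * ∏ i ∈ P, TG V g₀ σ δ i := by
  have hd := d.isLt
  rw [← prod_filter_mul_prod_filter_not P (fun i => c.1 < i.1 ∧ i.1 < d.1)
      (fun i => TG V g₀ (σ * wperm c d) (dflip c d δ) i),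
    ← prod_filter_mul_prod_filter_not P (fun i => c.1 < i.1 ∧ i.1 < d.1)
      (fun i => TG V g₀ σ δ i)]
  have hPO : P.filter (fun i => c.1 < i.1 ∧ i.1 < d.1) = Oset c d := by
    ext i
    simp only [Oset, mem_filter, mem_univ, true_and]
    exact ⟨fun h => h.2, fun h => ⟨hIoo i h.1 h.2, h⟩⟩
  have hrest : ∏ i ∈ P.filter (fun i => ¬(c.1 < i.1 ∧ i.1 < d.1)),
      TG V g₀ (σ * wperm c d) (dflip c d δ) i
      = ∏ i ∈ P.filter (fun i => ¬(c.1 < i.1 ∧ i.1 < d.1)), TG V g₀ σ δ i := by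
    refine prod_congr rfl fun i hi => ?_
    rw [mem_filter] at hi
    have h1 : i.1 ≠ c.1 := fun h => hcP ((Fin.ext h) ▸ hi.1)
    have h2 : i.1 ≠ d.1 := fun h => hdP ((Fin.ext h) ▸ hi.1)
    have hout : i.1 < c.1 ∨ d.1 < i.1 := by
      rcases hi with ⟨-, hno⟩
      omega
    obtain ⟨e1, e2, e3, e4⟩ := comp_out σ δ hout
    unfold TG
    rw [e1, e2, e3, e4]
  have hrun : ∏ i ∈ Oset c d, TG V g₀ (σ * wperm c d) (dflip c d δ) i
      = (-1)^((Oset c d).card) * ∏ i ∈ Oset c d, TG V g₀ σ δ i := by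
    have e0 : ∀ i ∈ Oset c d, TG V g₀ (σ * wperm c d) (dflip c d δ) i
        = -1 * TG V g₀ σ δ (ufun c d i) := by
      intro i hi
      simp only [Oset, mem_filter, mem_univ, true_and] at hi
      obtain ⟨e1, e2, e3, e4⟩ := comp_run σ δ hi
      have hju : (ufun c d i).1 = c.1 + d.1 - i.1 := by rw [ufun_val, if_pos hi]
      have hj1 : (ufun c d i + 1).1 = (ufun c d i).1 + 1 := add1_val_lt (by omega)
      have hne : σ (ufun c d i + 1) ≠ σ (ufun c d i) :=
        σ.injective.ne (Fin.ne_of_val_ne (by omega))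
      unfold TG
      rw [e1, e2, e3, e4, Bool.not_not]
      rw [hanti (σ (ufun c d i + 1), !δ (ufun c d i + 1)) (σ (ufun c d i), δ (ufun c d i)) hne]
      ring
    rw [prod_congr rfl e0, prod_mul_distrib, prod_const]
    congr 1
    refine prod_nbij' (ufun c d) (ufun c d) ?_ ?_ ?_ ?_ ?_
    · intro a ha
      simp only [Oset, mem_filter, mem_univ, true_and] at ha ⊢
      rw [ufun_val, if_pos ha]
      obtain ⟨x1, x2⟩ := ha; omega
    · intro a ha
      simp only [Oset, mem_filter, mem_univ, true_and] at ha ⊢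
      rw [ufun_val, if_pos ha]
      obtain ⟨x1, x2⟩ := ha; omega
    · intro a _; exact ufun_invol c d a
    · intro a _; exact ufun_invol c d a
    · intro a _; rfl
  rw [hPO, hrun, hrest]
  ring

lemma QP_flip (hcd : c.1 < d.1) (hcP : c ∉ P) (hdP : d ∉ P)
    (hIoo : ∀ j : Fin (n+2), c.1 < j.1 → j.1 < d.1 → j ∈ P) :
    ∏ i ∈ univ \ P, TQ V lam s (σ * wperm c d) (dflip c d δ) i
      = ∏ i ∈ univ \ P, TQ V lam s σ δ i := by
  have hcQ : c ∈ univ \ P := mem_sdiff.mpr ⟨mem_univ _, hcP⟩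
  have hdc : d ≠ c := Fin.ne_of_val_ne (by omega)
  have hdQ : d ∈ (univ \ P).erase c := mem_erase.mpr ⟨hdc, mem_sdiff.mpr ⟨mem_univ _, hdP⟩⟩
  rw [← mul_prod_erase _ _ hcQ, ← mul_prod_erase _ _ hdQ,
    ← mul_prod_erase _ (fun i => TQ V lam s σ δ i) hcQ, ← mul_prod_erase _ _ hdQ]
  have hrest : ∏ i ∈ ((univ \ P).erase c).erase d, TQ V lam s (σ * wperm c d) (dflip c d δ) i
      = ∏ i ∈ ((univ \ P).erase c).erase d, TQ V lam s σ δ i := by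
    refine prod_congr rfl fun i hi => ?_
    rw [mem_erase, mem_erase, mem_sdiff] at hi
    obtain ⟨hid, hic, -, hiP⟩ := hi
    have h1 : i.1 ≠ c.1 := fun h => hic (Fin.ext h)
    have h2 : i.1 ≠ d.1 := fun h => hid (Fin.ext h)
    have hno : ¬(c.1 < i.1 ∧ i.1 < d.1) := fun h => hiP (hIoo i h.1 h.2)
    have hout : i.1 < c.1 ∨ d.1 < i.1 := by omega
    obtain ⟨e1, e2, e3, e4⟩ := comp_out σ δ hout
    unfold TQ
    rw [e1, e2, e3, e4]
  rw [hrest, ← mul_assoc, ← mul_assoc]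
  congr 1
  obtain ⟨f1, f2, f3, f4⟩ := comp_c σ δ hcd
  obtain ⟨g1, g2, g3, g4⟩ := comp_d σ δ hcd
  unfold TQ
  rw [f1, f2, f3, f4, g1, g2, g3, g4, Bool.not_not]
  ring

lemma TT_flip (hcd : c.1 < d.1) (hcP : c ∉ P) (hdP : d ∉ P)
    (hIoo : ∀ j : Fin (n+2), c.1 < j.1 → j.1 < d.1 → j ∈ P)
    (hanti : ∀ u v : Fin (n+2) × Bool, u.1 ≠ v.1 → g₀ u v = - g₀ v u) :
    TT V g₀ lam s P (σ * wperm c d) (dflip c d δ) = - TT V g₀ lam s P σ δ := by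
  unfold TT
  rw [SG_flip, GP_flip g₀ σ δ hcd hcP hdP hIoo hanti, QP_flip lam s σ δ hcd hcP hdP hIoo,
    Bset_card hcd]
  have hx : (-1:V)^((Oset c d).card) * (-1)^((Oset c d).card) = 1 := by
    rw [← pow_add, ← two_mul]
    exact Even.neg_one_pow ⟨(Oset c d).card, by ring⟩
  rw [pow_succ]
  generalize (-1:V)^((Oset c d).card) = x at hx ⊢
  linear_combination (-(SG V δ * ((∏ i ∈ P, TG V g₀ σ δ i) * ∏ i ∈ univ \ P, TQ V lam s σ δ i))) * hx

end flips

lemma mem_PermS {σ : Equiv.Perm (Fin (n+2))} : σ ∈ PermS n ↔ σ 0 = 0 := by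
  simp only [PermS, Finset.mem_filter, Finset.mem_univ, true_and]
  constructor
  · intro h; exact h 0 rfl
  · intro h i hi
    have : i = 0 := Fin.ext hi
    rw [this, h]

lemma wperm_zero (c d : Fin (n+2)) : wperm c d 0 = 0 := by
  rw [wperm_apply, out_w (by simp [Fin.val_zero])]

lemma wperm_sq (c d : Fin (n+2)) : ∀ σ : Equiv.Perm (Fin (n+2)), (σ * wperm c d) * wperm c d = σ := by
  intro σ
  ext i
  simp only [Equiv.Perm.mul_apply, wperm_apply]
  rw [wfun_invol c d i]

lemma MM_zero (h2tf : ∀ x : V, x + x = 0 → x = 0)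
    (g₀ : Fin (n+2) × Bool → Fin (n+2) × Bool → V) (lam : V) (s : Fin (n+2) × Bool → V)
    (hanti : ∀ u v : Fin (n+2) × Bool, u.1 ≠ v.1 → g₀ u v = - g₀ v u)
    (P : Finset (Fin (n+2))) (hP2 : 2 ≤ (univ \ P).card) :
    MM V g₀ lam s P = 0 := by
  classical
  set Q := univ \ P with hQdef
  have hQne : Q.Nonempty := card_pos.mp (by omega)
  set d := Q.max' hQne with hd
  have hdQ : d ∈ Q := Q.max'_mem hQne
  have hQ2 : (Q.erase d).Nonempty := card_pos.mp (by rw [card_erase_of_mem hdQ]; omega)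
  set c := (Q.erase d).max' hQ2 with hc
  have hcQe : c ∈ Q.erase d := (Q.erase d).max'_mem hQ2
  have hcQ : c ∈ Q := mem_of_mem_erase hcQe
  have hcd : c.1 < d.1 := by
    have h1 : c ≤ d := Q.le_max' c hcQ
    have h2 : c ≠ d := ne_of_mem_erase hcQe
    have h3 : c.1 ≠ d.1 := fun h => h2 (Fin.ext h)
    have h4 : c.1 ≤ d.1 := h1
    omega
  have hcP : c ∉ P := (mem_sdiff.mp hcQ).2
  have hdP : d ∉ P := (mem_sdiff.mp hdQ).2
  have hIoo : ∀ j : Fin (n+2), c.1 < j.1 → j.1 < d.1 → j ∈ P := by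
    intro j h1 h2
    by_contra hj
    have hjQ : j ∈ Q := mem_sdiff.mpr ⟨mem_univ _, hj⟩
    have hjd : j ≠ d := Fin.ne_of_val_ne (by omega)
    have h5 : j ≤ c := (Q.erase d).le_max' j (mem_erase.mpr ⟨hjd, hjQ⟩)
    have h6 : j.1 ≤ c.1 := h5
    omega
  have main : MM V g₀ lam s P = - MM V g₀ lam s P := by
    calc MM V g₀ lam s P
        = ∑ σ ∈ PermS n, ∑ δ : Fin (n+2) → Bool, TT V g₀ lam s P (σ * wperm c d) (dflip c d δ) := by
          rw [MM]
          refine sum_nbij' (fun σ => σ * wperm c d) (fun σ => σ * wperm c d) ?_ ?_ ?_ ?_ ?_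
          · intro a ha
            rw [mem_PermS] at ha ⊢
            rw [Equiv.Perm.mul_apply, wperm_zero, ha]
          · intro a ha
            rw [mem_PermS] at ha ⊢
            rw [Equiv.Perm.mul_apply, wperm_zero, ha]
          · intro a _; exact wperm_sq c d a
          · intro a _; exact wperm_sq c d a
          · intro a _
            rw [wperm_sq c d a]
            refine Fintype.sum_bijective (dflip c d) (Function.Involutive.bijective (dflip_invol c d)) _ _ ?_
            intro δ
            rw [dflip_invol c d δ]
      _ = ∑ σ ∈ PermS n, ∑ δ : Fin (n+2) → Bool, - TT V g₀ lam s P σ δ :=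
          sum_congr rfl fun σ _ => sum_congr rfl fun δ _ =>
            TT_flip g₀ lam s σ δ hcd hcP hdP hIoo hanti
      _ = - MM V g₀ lam s P := by rw [MM]; simp
  exact h2tf _ (by nth_rewrite 2 [main]; ring)

/-! ### The reflection pairing -/

def negperm (n : ℕ) : Equiv.Perm (Fin (n+2)) :=
  Function.Involutive.toPerm (fun i => -i) neg_neg

lemma negperm_apply (i : Fin (n+2)) : negperm n i = -i := rfl

def dneg (δ : Fin (n+2) → Bool) (i : Fin (n+2)) : Bool := !δ (-i)

lemma dneg_invol : Function.Involutive (dneg (n := n)) := by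
  intro δ
  funext i
  simp [dneg]

lemma neg_sub_one_invol : Function.Involutive (fun i : Fin (n+2) => -i - 1) := by
  intro i; open Fin.CommRing in ring

section negs
variable (g₀ : Fin (n+2) × Bool → Fin (n+2) × Bool → V) (lam : V) (s : Fin (n+2) × Bool → V)
  (σ : Equiv.Perm (Fin (n+2))) (δ : Fin (n+2) → Bool)

lemma TG_neg (hanti : ∀ u v : Fin (n+2) × Bool, u.1 ≠ v.1 → g₀ u v = - g₀ v u) (i : Fin (n+2)) :
    TG V g₀ (σ * negperm n) (dneg δ) i = - TG V g₀ σ δ (-i - 1) := by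
  have h1 : -(i + 1) = -i - 1 := by open Fin.CommRing in ring
  have h2 : (-i - 1) + 1 = -i := by open Fin.CommRing in ring
  have hne : σ (-i) ≠ σ (-i - 1) := by
    refine σ.injective.ne fun h => ?_
    exact one_ne_zero (neg_eq_zero.mp (by open Fin.CommRing in linear_combination -h) : (1 : Fin (n+2)) = 0)
  unfold TG dneg
  simp only [Equiv.Perm.mul_apply, negperm_apply, h1, h2, Bool.not_not]
  rw [hanti (σ (-i), !δ (-i)) (σ (-i - 1), δ (-i - 1)) hne]

lemma TQ_neg (i : Fin (n+2)) :
    TQ V lam s (σ * negperm n) (dneg δ) i = TQ V lam s σ δ (-i - 1) := by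
  have h1 : -(i + 1) = -i - 1 := by open Fin.CommRing in ring
  have h2 : (-i - 1) + 1 = -i := by open Fin.CommRing in ring
  unfold TQ dneg
  simp only [Equiv.Perm.mul_apply, negperm_apply, h1, h2, Bool.not_not]
  ring

lemma SG_neg : SG V (dneg δ) = (-1)^(n+2) * SG V δ := by
  unfold SG
  have e1 : ∀ i : Fin (n+2), signR V (dneg δ i) = -1 * signR V (δ (negperm n i)) := by
    intro i
    rw [negperm_apply]
    unfold dneg
    rw [signR_not]
    ring
  rw [prod_congr rfl fun i _ => e1 i, prod_mul_distrib, prod_const,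
    Equiv.prod_comp (negperm n) (fun j => signR V (δ j)), card_univ, Fintype.card_fin]

lemma univ_sdiff_erase (c : Fin (n+2)) : (univ : Finset (Fin (n+2))) \ univ.erase c = {c} := by
  ext j
  simp only [mem_sdiff, mem_erase, mem_univ, true_and, mem_singleton]
  tauto

lemma TT_neg (hanti : ∀ u v : Fin (n+2) × Bool, u.1 ≠ v.1 → g₀ u v = - g₀ v u) (c : Fin (n+2)) :
    TT V g₀ lam s (univ.erase c) (σ * negperm n) (dneg δ)
      = - TT V g₀ lam s (univ.erase (-c - 1)) σ δ := by
  unfold TT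
  have hG : ∏ i ∈ univ.erase c, TG V g₀ (σ * negperm n) (dneg δ) i
      = (-1)^(n+1) * ∏ j ∈ univ.erase (-c - 1), TG V g₀ σ δ j := by
    rw [prod_congr rfl fun i _ => TG_neg g₀ σ δ hanti i]
    have : ∀ i : Fin (n+2), - TG V g₀ σ δ (-i - 1) = -1 * TG V g₀ σ δ (-i - 1) := fun i => by ring
    rw [prod_congr rfl fun i _ => this i, prod_mul_distrib, prod_const,
      card_erase_of_mem (mem_univ c), card_univ, Fintype.card_fin]
    congr 1
    refine prod_nbij' (fun i => -i - 1) (fun j => -j - 1) ?_ ?_ ?_ ?_ ?_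
    · intro a ha
      rw [mem_erase] at ha ⊢
      exact ⟨fun h => ha.1 (by open Fin.CommRing in linear_combination -h), mem_univ _⟩
    · intro a ha
      rw [mem_erase] at ha ⊢
      exact ⟨fun h => ha.1 (by open Fin.CommRing in linear_combination -h), mem_univ _⟩
    · intro a _; exact neg_sub_one_invol a
    · intro a _; exact neg_sub_one_invol a
    · intro a _; rfl
  have hQ : ∏ i ∈ univ \ univ.erase c, TQ V lam s (σ * negperm n) (dneg δ) i
      = ∏ i ∈ univ \ univ.erase (-c - 1), TQ V lam s σ δ i := by
    rw [univ_sdiff_erase, univ_sdiff_erase, prod_singleton, prod_singleton]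
    exact TQ_neg lam s σ δ c
  rw [hG, hQ, SG_neg]
  have hodd : (-1 : V)^(n+2) * (-1)^(n+1) = -1 := by
    rw [← pow_add]
    exact Odd.neg_one_pow ⟨n + 1, by ring⟩
  linear_combination (SG V δ * ((∏ j ∈ univ.erase (-c - 1), TG V g₀ σ δ j) *
    ∏ i ∈ univ \ univ.erase (-c - 1), TQ V lam s σ δ i)) * hodd

end negs

lemma negperm_sq (σ : Equiv.Perm (Fin (n+2))) : (σ * negperm n) * negperm n = σ := by
  ext i
  simp only [Equiv.Perm.mul_apply, negperm_apply, neg_neg]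

lemma MM_erase (h2tf : ∀ x : V, x + x = 0 → x = 0)
    (g₀ : Fin (n+2) × Bool → Fin (n+2) × Bool → V) (lam : V) (s : Fin (n+2) × Bool → V)
    (hanti : ∀ u v : Fin (n+2) × Bool, u.1 ≠ v.1 → g₀ u v = - g₀ v u) (c : Fin (n+2)) :
    MM V g₀ lam s (univ.erase c) = - MM V g₀ lam s (univ.erase (-c - 1)) := by
  calc MM V g₀ lam s (univ.erase c)
      = ∑ σ ∈ PermS n, ∑ δ : Fin (n+2) → Bool, TT V g₀ lam s (univ.erase c) (σ * negperm n) (dneg δ) := by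
        rw [MM]
        refine sum_nbij' (fun σ => σ * negperm n) (fun σ => σ * negperm n) ?_ ?_ ?_ ?_ ?_
        · intro a ha
          rw [mem_PermS] at ha ⊢
          rw [Equiv.Perm.mul_apply, negperm_apply, neg_zero, ha]
        · intro a ha
          rw [mem_PermS] at ha ⊢
          rw [Equiv.Perm.mul_apply, negperm_apply, neg_zero, ha]
        · intro a _; exact negperm_sq a
        · intro a _; exact negperm_sq a
        · intro a _
          rw [negperm_sq a]
          refine Fintype.sum_bijective dneg (Function.Involutive.bijective dneg_invol) _ _ ?_
          intro δ
          rw [dneg_invol δ]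
    _ = ∑ σ ∈ PermS n, ∑ δ : Fin (n+2) → Bool, - TT V g₀ lam s (univ.erase (-c - 1)) σ δ :=
        sum_congr rfl fun σ _ => sum_congr rfl fun δ _ => TT_neg g₀ lam s σ δ hanti c
    _ = - MM V g₀ lam s (univ.erase (-c - 1)) := by rw [MM]; simp

lemma sum_MM_erase (h2tf : ∀ x : V, x + x = 0 → x = 0)
    (g₀ : Fin (n+2) × Bool → Fin (n+2) × Bool → V) (lam : V) (s : Fin (n+2) × Bool → V)
    (hanti : ∀ u v : Fin (n+2) × Bool, u.1 ≠ v.1 → g₀ u v = - g₀ v u) :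
    ∑ c : Fin (n+2), MM V g₀ lam s (univ.erase c) = 0 := by
  have h1 : ∑ c : Fin (n+2), MM V g₀ lam s (univ.erase (-c - 1))
      = ∑ c : Fin (n+2), MM V g₀ lam s (univ.erase c) :=
    Fintype.sum_bijective (fun c => -c - 1) (Function.Involutive.bijective neg_sub_one_invol)
      _ _ (fun c => rfl)
  have h2 : ∑ c : Fin (n+2), MM V g₀ lam s (univ.erase c)
      = - ∑ c : Fin (n+2), MM V g₀ lam s (univ.erase c) := by
    calc ∑ c : Fin (n+2), MM V g₀ lam s (univ.erase c)
        = ∑ c : Fin (n+2), - MM V g₀ lam s (univ.erase (-c - 1)) :=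
          sum_congr rfl fun c _ => MM_erase h2tf g₀ lam s hanti c
      _ = - ∑ c : Fin (n+2), MM V g₀ lam s (univ.erase (-c - 1)) := by simp
      _ = - ∑ c : Fin (n+2), MM V g₀ lam s (univ.erase c) := by rw [h1]
  exact h2tf _ (by nth_rewrite 2 [h2]; ring)

theorem keyW (h2tf : ∀ x : V, x + x = 0 → x = 0)
    (g₀ : Fin (n+2) × Bool → Fin (n+2) × Bool → V) (lam : V) (s : Fin (n+2) × Bool → V)
    (hanti : ∀ u v : Fin (n+2) × Bool, u.1 ≠ v.1 → g₀ u v = - g₀ v u) :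
    Wsum (fun u v => g₀ u v + lam * (s u * s v)) (pc n) = Wsum g₀ (pc n) := by
  rw [expandW, ← add_sum_erase _ _ (mem_powerset_self (univ : Finset (Fin (n+2)))), MM_univ]
  suffices h : ∑ P ∈ ((univ : Finset (Fin (n+2))).powerset).erase univ, MM V g₀ lam s P = 0 by
    rw [h, add_zero]
  rw [← sum_filter_add_sum_filter_not (((univ : Finset (Fin (n+2))).powerset).erase univ)
    (fun P => (univ \ P).card = 1)]
  have hz : ∑ P ∈ (((univ : Finset (Fin (n+2))).powerset).erase univ).filter
      (fun P => ¬((univ \ P).card = 1)), MM V g₀ lam s P = 0 := by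
    refine sum_eq_zero fun P hP => ?_
    rw [mem_filter, mem_erase, mem_powerset] at hP
    obtain ⟨⟨hne, hsub⟩, hcard⟩ := hP
    have hnonempty : ((univ : Finset (Fin (n+2))) \ P).Nonempty := by
      rw [sdiff_nonempty]
      intro hsub2
      exact hne (Finset.Subset.antisymm hsub hsub2)
    have h2 : 2 ≤ ((univ : Finset (Fin (n+2))) \ P).card := by
      have h1 := card_pos.mpr hnonempty
      omega
    exact MM_zero h2tf g₀ lam s hanti P h2
  have hone : (((univ : Finset (Fin (n+2))).powerset).erase univ).filter
      (fun P => (univ \ P).card = 1)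
      = Finset.image (fun c : Fin (n+2) => univ.erase c) univ := by
    ext P
    simp only [mem_filter, mem_erase, mem_powerset, Finset.mem_image, mem_univ, true_and]
    constructor
    · rintro ⟨⟨hne, hsub⟩, hcard⟩
      obtain ⟨c, hc⟩ := card_eq_one.mp hcard
      refine ⟨c, ?_⟩
      have hP : P = univ \ {c} := by rw [← hc]; exact (Finset.sdiff_sdiff_eq_self hsub).symm
      rw [hP, ← erase_eq]
    · rintro ⟨c, rfl⟩
      refine ⟨⟨?_, erase_subset _ _⟩, ?_⟩
      · intro h
        have hc := mem_univ c
        rw [← h] at hc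
        exact (mem_erase.mp hc).1 rfl
      · rw [univ_sdiff_erase, card_singleton]
  have hinj : ∀ x ∈ (univ : Finset (Fin (n+2))), ∀ y ∈ univ,
      univ.erase x = univ.erase y → x = y := by
    intro x _ y _ hxy
    by_contra hne
    have h1 : x ∈ univ.erase y := mem_erase.mpr ⟨hne, mem_univ _⟩
    rw [← hxy] at h1
    exact (mem_erase.mp h1).1 rfl
  rw [hz, add_zero, hone, sum_image hinj]
  exact sum_MM_erase h2tf g₀ lam s hanti

end key


section basic
variable {R α : Type*} [CommRing R]

lemma Wsum_hom {U : Type*} [CommRing U] (ρ : U →+* R) (h : α → α → U) {k : ℕ}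
    (p : Fin k → α × α) : ρ (Wsum h p) = Wsum (fun u v => ρ (h u v)) p := by
  unfold Wsum
  rw [map_sum]
  refine Finset.sum_congr rfl fun ε _ => ?_
  rw [map_sum]
  refine Finset.sum_congr rfl fun σ _ => ?_
  rw [map_prod]
  refine Finset.prod_congr rfl fun i _ => ?_
  rw [map_mul]
  congr 1
  cases ε (σ i) <;> simp [signR]

lemma Wsum_comap {α' : Type*} (π : α' → α) {k : ℕ} (p : Fin k → α × α) (p' : Fin k → α' × α')
    (hB : ∀ j e, π (Bc (p' j) e) = Bc (p j) e) (hA : ∀ j e, π (Ac (p' j) e) = Ac (p j) e)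
    (h : α → α → R) : Wsum (fun u v => h (π u) (π v)) p' = Wsum h p := by
  unfold Wsum
  refine Finset.sum_congr rfl fun ε _ => Finset.sum_congr rfl fun σ _ =>
    Finset.prod_congr rfl fun i _ => ?_
  simp only [hB, hA]

lemma Wsum_congr_used {k : ℕ} (hk : 2 ≤ k) (p : Fin k → α × α) (h₁ h₂ : α → α → R)
    (H : ∀ i j : Fin k, i ≠ j → ∀ e e' : Bool,
      h₁ (Bc (p i) e) (Ac (p j) e') = h₂ (Bc (p i) e) (Ac (p j) e')) :
    Wsum h₁ p = Wsum h₂ p := by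
  obtain ⟨n, rfl⟩ : ∃ n, k = n + 2 := ⟨k - 2, by omega⟩
  unfold Wsum
  refine Finset.sum_congr rfl fun ε _ => Finset.sum_congr rfl fun σ _ =>
    Finset.prod_congr rfl fun i _ => ?_
  have hne : i ≠ finRotate (n+2) i := by
    rw [finRotate_succ_apply]
    intro hcon
    have h0 : i + 0 = i + 1 := by simpa using hcon
    have : (0 : Fin (n+2)) = 1 := add_left_cancel h0
    simp at this
  rw [H (σ i) (σ (finRotate (n+2) i)) (σ.injective.ne hne)]

lemma Wsum_two_mul {k : ℕ} (p : Fin k → α × α) (h : α → α → R) :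
    Wsum (fun u v => 2 * h u v) p = 2 ^ k * Wsum h p := by
  unfold Wsum
  rw [Finset.mul_sum]
  refine Finset.sum_congr rfl fun ε _ => ?_
  rw [Finset.mul_sum]
  refine Finset.sum_congr rfl fun σ _ => ?_
  have : ∀ i : Fin k, signR R (ε (σ i)) * (2 * h (Bc (p (σ i)) (ε (σ i))) (Ac (p (σ (finRotate k i))) (ε (σ (finRotate k i)))))
      = 2 * (signR R (ε (σ i)) * h (Bc (p (σ i)) (ε (σ i))) (Ac (p (σ (finRotate k i))) (ε (σ (finRotate k i))))) :=
    fun i => by ring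
  rw [Finset.prod_congr rfl (fun i _ => this i), Finset.prod_mul_distrib, Finset.prod_const,
    Finset.card_univ, Fintype.card_fin]

end basic

/-! ### k = 1 case -/

lemma WsumOne {R α : Type*} [CommRing R] (h : α → α → R) (p : Fin 1 → α × α) :
    Wsum h p = h (p 0).2 (p 0).1 - h (p 0).1 (p 0).2 := by
  unfold Wsum
  have hfilter : (Finset.univ.filter
      (fun σ : Equiv.Perm (Fin 1) => ∀ i : Fin 1, (i:ℕ) = 0 → σ i = i)) = {1} := by
    ext σ
    simp only [mem_filter, mem_univ, true_and, mem_singleton]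
    constructor
    · intro _
      exact Equiv.ext fun i => Subsingleton.elim _ _
    · intro h2 i _
      rw [h2]; rfl
  rw [hfilter]
  have hterm : ∀ ε : Fin 1 → Bool,
      (∑ σ ∈ ({1} : Finset (Equiv.Perm (Fin 1))), ∏ i : Fin 1,
        signR R (ε (σ i)) * h (Bc (p (σ i)) (ε (σ i)))
          (Ac (p (σ (finRotate 1 i))) (ε (σ (finRotate 1 i)))))
      = signR R (ε 0) * h (Bc (p 0) (ε 0)) (Ac (p 0) (ε 0)) := by
    intro ε
    rw [sum_singleton, Fin.prod_univ_one, finRotate_one]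
    rfl
  rw [Finset.sum_congr rfl fun ε _ => hterm ε]
  rw [← Equiv.sum_comp ((Equiv.funUnique (Fin 1) Bool).symm)
    (fun ε : Fin 1 → Bool => signR R (ε 0) * h (Bc (p 0) (ε 0)) (Ac (p 0) (ε 0)))]
  rw [Fintype.sum_bool]
  show (1:R) * h (p 0).2 (p 0).1 + (-1) * h (p 0).1 (p 0).2
    = h (p 0).2 (p 0).1 - h (p 0).1 (p 0).2
  ring

/-! ### key lemma, division-free form -/

theorem keyW2 {V : Type*} [CommRing V] {n : ℕ} (h2tf : ∀ x : V, x + x = 0 → x = 0)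
    (half : V) (hhalf : 2 * half = 1)
    (G : Fin (n+2) × Bool → Fin (n+2) × Bool → V) (S : Fin (n+2) × Bool → V)
    (hrel : ∀ u v : Fin (n+2) × Bool, u.1 ≠ v.1 → G u v + G v u = -(S u * S v)) :
    Wsum (fun u v => G u v - G v u) (pc n) = 2^(n+2) * Wsum G (pc n) := by
  have hanti : ∀ u v : Fin (n+2) × Bool, u.1 ≠ v.1 →
      (fun u v => G u v + half * (S u * S v)) u v
        = - (fun u v => G u v + half * (S u * S v)) v u := by
    intro u v huv
    have h := hrel u v huv
    show G u v + half * (S u * S v) = -(G v u + half * (S v * S u))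
    linear_combination h + (S u * S v) * hhalf
  have step2 : Wsum (fun u v => G u v + half * (S u * S v)) (pc n) = Wsum G (pc n) := by
    have hkey := keyW h2tf (fun u v => G u v + half * (S u * S v)) (-half) S hanti
    rw [← hkey]
    congr 1
    funext u v
    ring
  have step1 : Wsum (fun u v => G u v - G v u) (pc n)
      = Wsum (fun u v => 2 * (G u v + half * (S u * S v))) (pc n) := by
    refine Wsum_congr_used (by omega) (pc n) _ _ ?_
    intro i j hij e e'
    rw [Bc_pc, Ac_pc]
    have h := hrel (i, e) (j, !e') hij
    show G (i,e) (j,!e') - G (j,!e') (i,e) = 2 * (G (i,e) (j,!e') + half * (S (i,e) * S (j,!e')))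
    linear_combination -h - (S (i,e) * S (j, !e')) * hhalf
  rw [step1, Wsum_two_mul, step2]

/-! ### Universal coefficients -/

section universal
variable (n : ℕ)

abbrev UVars (n : ℕ) := ((Fin (n+2) × Bool) × (Fin (n+2) × Bool)) ⊕ (Fin (n+2) × Bool)

noncomputable def GU : Fin (n+2) × Bool → Fin (n+2) × Bool → MvPolynomial (UVars n) ℤ :=
  fun u v =>
    if u.1 < v.1 then MvPolynomial.X (Sum.inl (u, v))
    else if v.1 < u.1 then
      -((2 * MvPolynomial.X (Sum.inr u) - 1) * (2 * MvPolynomial.X (Sum.inr v) - 1))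
        - MvPolynomial.X (Sum.inl (v, u))
    else 0

noncomputable def GQ : Fin (n+2) × Bool → Fin (n+2) × Bool → MvPolynomial (UVars n) ℚ :=
  fun u v =>
    if u.1 < v.1 then MvPolynomial.X (Sum.inl (u, v))
    else if v.1 < u.1 then
      -((2 * MvPolynomial.X (Sum.inr u) - 1) * (2 * MvPolynomial.X (Sum.inr v) - 1))
        - MvPolynomial.X (Sum.inl (v, u))
    else 0

noncomputable def SQ : Fin (n+2) × Bool → MvPolynomial (UVars n) ℚ :=
  fun u => 2 * MvPolynomial.X (Sum.inr u) - 1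

lemma GQ_rel : ∀ u v : Fin (n+2) × Bool, u.1 ≠ v.1 →
    GQ n u v + GQ n v u = -(SQ n u * SQ n v) := by
  intro u v huv
  unfold GQ SQ
  rcases lt_trichotomy u.1 v.1 with h | h | h
  · rw [if_pos h, if_neg (lt_asymm h), if_pos h]
    ring
  · exact absurd h huv
  · rw [if_neg (lt_asymm h), if_pos h, if_pos h]
    ring

lemma mainQ : Wsum (fun u v => GQ n u v - GQ n v u) (pc n)
    = 2^(n+2) * Wsum (GQ n) (pc n) := by
  refine keyW2 ?_ (MvPolynomial.C (2⁻¹ : ℚ)) ?_ (GQ n) (SQ n) (GQ_rel n)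
  · intro x hx
    have h2x : (2 : MvPolynomial (UVars n) ℚ) * x = 0 := by linear_combination hx
    have h20 : (2 : MvPolynomial (UVars n) ℚ) ≠ 0 := by
      intro h
      have := congrArg (MvPolynomial.eval (fun _ => (0:ℚ))) h
      rw [map_ofNat] at this
      norm_num at this
    exact (mul_eq_zero.mp h2x).resolve_left h20
  · have h2C : (2 : MvPolynomial (UVars n) ℚ) = MvPolynomial.C 2 :=
      (map_ofNat (MvPolynomial.C : ℚ →+* MvPolynomial (UVars n) ℚ) 2).symm
    rw [h2C, ← map_mul, show (2:ℚ) * 2⁻¹ = 1 by norm_num, map_one]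

lemma map_GU : ∀ u v : Fin (n+2) × Bool,
    MvPolynomial.map (Int.castRingHom ℚ) (GU n u v) = GQ n u v := by
  intro u v
  unfold GU GQ
  split_ifs <;> simp

lemma mainU : Wsum (fun u v => GU n u v - GU n v u) (pc n)
    = 2^(n+2) * Wsum (GU n) (pc n) := by
  apply MvPolynomial.map_injective (Int.castRingHom ℚ) Int.cast_injective
  have t1 : (MvPolynomial.map (Int.castRingHom ℚ))
      (Wsum (fun u v => GU n u v - GU n v u) (pc n))
      = Wsum (fun u v => GQ n u v - GQ n v u) (pc n) := by
    rw [Wsum_hom (MvPolynomial.map (Int.castRingHom ℚ)) _ (pc n)]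
    congr 1
    funext u v
    rw [map_sub, map_GU, map_GU]
  have t2 : (MvPolynomial.map (Int.castRingHom ℚ)) (2^(n+2) * Wsum (GU n) (pc n))
      = 2^(n+2) * Wsum (GQ n) (pc n) := by
    rw [map_mul, map_pow, map_ofNat, Wsum_hom (MvPolynomial.map (Int.castRingHom ℚ)) _ (pc n)]
    have he : (fun u v => (MvPolynomial.map (Int.castRingHom ℚ)) (GU n u v)) = GQ n := by
      funext u v; rw [map_GU]
    rw [he]
  rw [t1, t2, mainQ]

end universal

/-! ### Specialization -/

def piMap {α : Type*} {n : ℕ} (p : Fin (n+2) → α × α) : Fin (n+2) × Bool → α :=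
  fun u => if u.2 then (p u.1).2 else (p u.1).1

noncomputable def phiHom {R α : Type*} [CommRing R] {n : ℕ} (p : Fin (n+2) → α × α)
    (g : α → α → R) (t : α → R) : MvPolynomial (UVars n) ℤ →+* R :=
  MvPolynomial.eval₂Hom (Int.castRingHom R)
    (fun x => Sum.rec (fun y => g (piMap p y.1) (piMap p y.2)) (fun u => t (piMap p u)) x)

lemma phiHom_X_inl {R α : Type*} [CommRing R] {n : ℕ} (p : Fin (n+2) → α × α)
    (g : α → α → R) (t : α → R) (u v : Fin (n+2) × Bool) :
    phiHom p g t (MvPolynomial.X (Sum.inl (u, v))) = g (piMap p u) (piMap p v) :=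
  MvPolynomial.eval₂Hom_X' _ _ _

lemma phiHom_X_inr {R α : Type*} [CommRing R] {n : ℕ} (p : Fin (n+2) → α × α)
    (g : α → α → R) (t : α → R) (u : Fin (n+2) × Bool) :
    phiHom p g t (MvPolynomial.X (Sum.inr u)) = t (piMap p u) :=
  MvPolynomial.eval₂Hom_X' _ _ _


/-- Algebraic form of the key combinatorial lemma (Lemma 1.3 / Lemma A.1):
if `g(u,v) + g(v,u) = −(2t(u)−1)(2t(v)−1)` for labels attached to distinct indices, and
`f(u,v) = g(u,v) − g(v,u)`, then `W_f = 2^k · W_g`. -/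
theorem Wf_eq_two_pow_mul_Wg {R α : Type*} [CommRing R] {k : ℕ} (hk : 1 ≤ k)
    (p : Fin k → α × α) (g f : α → α → R) (t : α → R)
    (hrel : ∀ i j : Fin k, i ≠ j → ∀ u v : α,
      (u = (p i).1 ∨ u = (p i).2) → (v = (p j).1 ∨ v = (p j).2) →
      g u v + g v u = -((2 * t u - 1) * (2 * t v - 1)))
    (hf : ∀ u v : α, f u v = g u v - g v u) :
    Wsum f p = 2 ^ k * Wsum g p := by
  match k, hk, p, hrel with
  | 1, _, p, hrel =>
    rw [WsumOne f p, WsumOne g p, hf, hf]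
    ring
  | (n+2), _, p, hrel =>
    classical
    have hmem : ∀ u : Fin (n+2) × Bool, piMap p u = (p u.1).1 ∨ piMap p u = (p u.1).2 := by
      rintro ⟨i, b⟩
      cases b
      · left; rfl
      · right; rfl
    have hΦG : ∀ u v : Fin (n+2) × Bool, u.1 ≠ v.1 →
        phiHom p g t (GU n u v) = g (piMap p u) (piMap p v) := by
      intro u v huv
      unfold GU
      rcases lt_trichotomy u.1 v.1 with h | h | h
      · rw [if_pos h, phiHom_X_inl]
      · exact absurd h huv
      · rw [if_neg (lt_asymm h), if_pos h]
        have hr := hrel u.1 v.1 huv (piMap p u) (piMap p v) (hmem u) (hmem v)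
        simp only [map_sub, map_neg, map_mul, map_ofNat, map_one, phiHom_X_inl, phiHom_X_inr]
        linear_combination -hr
    have t1 : phiHom p g t (Wsum (fun u v => GU n u v - GU n v u) (pc n)) = Wsum f p := by
      rw [Wsum_hom (phiHom p g t) _ (pc n)]
      have e1 : Wsum (fun u v => phiHom p g t (GU n u v - GU n v u)) (pc n)
          = Wsum (fun u v => f (piMap p u) (piMap p v)) (pc n) := by
        refine Wsum_congr_used (by omega) (pc n) _ _ ?_
        intro i j hij e e'
        rw [Bc_pc, Ac_pc]
        have h1 : ((i, e) : Fin (n+2) × Bool).1 ≠ ((j, !e') : Fin (n+2) × Bool).1 := hij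
        rw [map_sub, hΦG _ _ h1, hΦG _ _ h1.symm, hf]
      rw [e1]
      exact Wsum_comap (piMap p) p (pc n) (fun j e => by cases e <;> rfl)
        (fun j e => by cases e <;> rfl) f
    have t2 : phiHom p g t (2^(n+2) * Wsum (GU n) (pc n)) = 2^(n+2) * Wsum g p := by
      rw [map_mul, map_pow, map_ofNat, Wsum_hom (phiHom p g t) _ (pc n)]
      have e1 : Wsum (fun u v => phiHom p g t (GU n u v)) (pc n)
          = Wsum (fun u v => g (piMap p u) (piMap p v)) (pc n) := by
        refine Wsum_congr_used (by omega) (pc n) _ _ ?_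
        intro i j hij e e'
        rw [Bc_pc, Ac_pc]
        exact hΦG _ _ hij
      rw [e1]
      rw [Wsum_comap (piMap p) p (pc n) (fun j e => by cases e <;> rfl)
        (fun j e => by cases e <;> rfl) g]
    rw [← t1, ← t2]
    exact congrArg _ (mainU n)
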